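/- arXiv:1406.3849 — 4 statements merged into one kernel-verified Lean document; each statement's English description precedes it below -/
import Mathlib

section
/- Let f : X → ℝ^d be a measurable function on a metric space X, E ⊆ X a Borel set, and suppose there exists a probability measure ϖ supported on E with ∬_{E×E} |f(x) - f(y)|^{-λ} ϖ(dx) ϖ(dy) < ∞ for some λ > 0. Then the λ-dimensional Hausdorff measure of f(E) is strictly positive: ℋ^λ(f(E)) > 0. -/
open MeasureTheory
open scoped ENNReal

set_option maxHeartbeats 1000000 in
/-- if `f : X → ℝ^d` is measurable, `E ⊆ X` is Borel, and some probability
measure `ϖ` supported on `E` has finite `λ`-energy for the kernel `|f x - f y|^{-λ}`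
(with `0^{-λ} = ∞`), then `ℋ^λ(f(E)) > 0`. -/
theorem hausdorff_image_pos_of_finite_energy
    {X : Type*} [MetricSpace X] [MeasurableSpace X] [BorelSpace X]
    (d : ℕ) (f : X → EuclideanSpace ℝ (Fin d)) (hf : Measurable f)
    (E : Set X) (hE : MeasurableSet E)
    (ϖ : Measure X) [IsProbabilityMeasure ϖ] (hϖ : ϖ Eᶜ = 0)
    (l : ℝ) (hl : 0 < l)
    (hfin : (∫⁻ x in E, ∫⁻ y in E, (edist (f x) (f y)) ^ (-l) ∂ϖ ∂ϖ) < ∞) :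
    0 < μH[l] (f '' E) := by
  -- the potential
  set g : X → ℝ≥0∞ := fun x => ∫⁻ y in E, (edist (f x) (f y)) ^ (-l) ∂ϖ with hg_def
  have hker : Measurable (fun p : X × X => (edist (f p.1) (f p.2)) ^ (-l)) :=
    ((hf.comp measurable_fst).edist (hf.comp measurable_snd)).pow_const _
  have hg : Measurable g :=
    Measurable.lintegral_prod_right (f := fun x y => (edist (f x) (f y)) ^ (-l)) hker
  -- a.e. finiteness of the potential on E
  have hae : ∀ᵐ x ∂(ϖ.restrict E), g x < ∞ := ae_lt_top hg hfin.ne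
  -- ϖ E = 1
  have hϖE : ϖ E = 1 := by
    have h1 : (1 : ℝ≥0∞) = ϖ Set.univ := (measure_univ).symm
    have h2 : ϖ Set.univ ≤ ϖ E + ϖ Eᶜ := by
      rw [← Set.union_compl_self E]; exact measure_union_le _ _
    have := h2.trans_eq (by rw [hϖ, add_zero])
    exact le_antisymm (le_of_le_of_eq (measure_mono (Set.subset_univ _)) h1.symm)
      (h1 ▸ this)
  -- find n with ϖ (A n) > 0 where A n = {x ∈ E | g x ≤ n}
  set A : ℕ → Set X := fun n => E ∩ {x | g x ≤ n} with hA_def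
  have hAmeas : ∀ n, MeasurableSet (A n) := fun n =>
    hE.inter (hg measurableSet_Iic)
  have hNull : ϖ (E ∩ {x | g x = ∞}) = 0 := by
    have := ae_iff.1 hae
    rw [Measure.restrict_apply (by
      simp only [not_lt, top_le_iff]
      exact hg (measurableSet_singleton ∞))] at this
    simpa [Set.inter_comm, not_lt, top_le_iff] using this
  obtain ⟨n, hn⟩ : ∃ n : ℕ, ϖ (A n) ≠ 0 := by
    by_contra h
    push_neg at h
    have hU : ϖ (⋃ n, A n) = 0 := measure_iUnion_null h
    have hsub : E ⊆ (⋃ n, A n) ∪ (E ∩ {x | g x = ∞}) := by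
      intro x hx
      rcases eq_or_ne (g x) ∞ with h1 | h1
      · exact Or.inr ⟨hx, h1⟩
      · obtain ⟨m, hm⟩ := ENNReal.exists_nat_gt h1
        exact Or.inl (Set.mem_iUnion.2 ⟨m, hx, hm.le⟩)
    have : ϖ E ≤ 0 := by
      calc ϖ E ≤ ϖ ((⋃ n, A n) ∪ (E ∩ {x | g x = ∞})) := measure_mono hsub
        _ ≤ ϖ (⋃ n, A n) + ϖ (E ∩ {x | g x = ∞}) := measure_union_le _ _
        _ = 0 := by rw [hU, hNull, add_zero]
    rw [hϖE] at this
    exact one_ne_zero (le_antisymm this zero_le)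
  -- Frostman bound
  set C : ℝ≥0∞ := ((n : ℝ≥0∞) + 1) * 2 ^ l with hC_def
  have h2l_ne_zero : (2 : ℝ≥0∞) ^ l ≠ 0 := by
    simp [ENNReal.rpow_eq_zero_iff]
  have h2l_ne_top : (2 : ℝ≥0∞) ^ l ≠ ∞ := by
    simp [ENNReal.rpow_eq_top_iff, hl, hl.not_gt]
  have hC0 : C ≠ 0 := by
    simp [hC_def, h2l_ne_zero]
  have hCtop : C ≠ ∞ :=
    ENNReal.mul_ne_top (by simp) h2l_ne_top
  have frostman : ∀ (z : EuclideanSpace ℝ (Fin d)) (r : ℝ≥0∞), r ≤ 1 →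
      ϖ (A n ∩ f ⁻¹' EMetric.closedBall z r) ≤ C * r ^ l := by
    intro z r hr
    rcases Set.eq_empty_or_nonempty (A n ∩ f ⁻¹' EMetric.closedBall z r) with hSe | ⟨x₀, hx₀⟩
    · rw [hSe]; simp
    have hx₀E : x₀ ∈ E := hx₀.1.1
    have hgx₀ : g x₀ ≤ n := hx₀.1.2
    have hball : edist (f x₀) z ≤ r := hx₀.2
    -- S ⊆ T
    set T : Set X := E ∩ {y | edist (f x₀) (f y) ≤ 2 * r} with hT_def
    have hTmeas : MeasurableSet T :=
      hE.inter ((measurable_const.edist hf) measurableSet_Iic)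
    have hST : A n ∩ f ⁻¹' EMetric.closedBall z r ⊆ T := by
      rintro y ⟨⟨hyE, -⟩, hy2⟩
      refine ⟨hyE, ?_⟩
      have : edist (f x₀) (f y) ≤ edist (f x₀) z + edist z (f y) := edist_triangle _ _ _
      have h2 : edist z (f y) ≤ r := by rwa [edist_comm]
      calc edist (f x₀) (f y) ≤ edist (f x₀) z + edist z (f y) := this
        _ ≤ r + r := add_le_add hball h2
        _ = 2 * r := (two_mul r).symm
    -- (2r)^(-l) * ϖ T ≤ n
    have hkey : (2 * r) ^ (-l) * ϖ T ≤ (n : ℝ≥0∞) := by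
      have h1 : (2 * r) ^ (-l) * ϖ T = ∫⁻ _ in T, (2 * r) ^ (-l) ∂ϖ := by
        rw [setLIntegral_const]
      have h2 : ∫⁻ y in T, (2 * r) ^ (-l) ∂ϖ ≤
          ∫⁻ y in T, (edist (f x₀) (f y)) ^ (-l) ∂ϖ := by
        refine setLIntegral_mono' hTmeas ?_
        intro y hy
        rw [ENNReal.rpow_neg, ENNReal.rpow_neg]
        exact ENNReal.inv_le_inv.2 (ENNReal.rpow_le_rpow hy.2 hl.le)
      have h3 : ∫⁻ y in T, (edist (f x₀) (f y)) ^ (-l) ∂ϖ ≤ g x₀ := by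
        exact lintegral_mono_set (Set.inter_subset_left)
      calc (2 * r) ^ (-l) * ϖ T = _ := h1
        _ ≤ _ := h2
        _ ≤ g x₀ := h3
        _ ≤ n := hgx₀
    -- conclude
    have hT_bound : ϖ T ≤ (n : ℝ≥0∞) * (2 * r) ^ l := by
      rcases eq_or_ne r 0 with hr0 | hr0
      · have : (2 * r) ^ (-l) = ∞ := by
          rw [hr0, mul_zero, ENNReal.zero_rpow_of_neg (neg_neg_iff_pos.2 hl)]
        rw [this] at hkey
        have hT0 : ϖ T = 0 := by
          by_contra h
          rw [ENNReal.top_mul h] at hkey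
          exact (ENNReal.natCast_ne_top n) (top_le_iff.1 hkey)
        simp [hT0]
      · have h2rne : (2 : ℝ≥0∞) * r ≠ 0 := by simp [hr0]
        have h2r0 : (2 * r) ^ l ≠ 0 := by
          simp [ENNReal.rpow_eq_zero_iff, h2rne, hl.not_gt]
        have h2rtop : (2 * r) ^ l ≠ ∞ := by
          have : (2 : ℝ≥0∞) * r ≠ ∞ :=
            ENNReal.mul_ne_top (by norm_num) (hr.trans_lt (by norm_num)).ne
          simp [ENNReal.rpow_eq_top_iff, this, hl.not_gt, hl]
        rw [ENNReal.rpow_neg] at hkey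
        calc ϖ T = ((2 * r) ^ l * ((2 * r) ^ l)⁻¹) * ϖ T := by
              rw [ENNReal.mul_inv_cancel h2r0 h2rtop, one_mul]
          _ = (2 * r) ^ l * (((2 * r) ^ l)⁻¹ * ϖ T) := by ring
          _ ≤ (2 * r) ^ l * n := mul_le_mul_right hkey _
          _ = n * (2 * r) ^ l := mul_comm _ _
    calc ϖ (A n ∩ f ⁻¹' EMetric.closedBall z r) ≤ ϖ T := measure_mono hST
      _ ≤ (n : ℝ≥0∞) * (2 * r) ^ l := hT_bound
      _ = (n : ℝ≥0∞) * (2 ^ l * r ^ l) := by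
          rw [ENNReal.mul_rpow_of_nonneg _ _ hl.le]
      _ ≤ ((n : ℝ≥0∞) + 1) * 2 ^ l * r ^ l := by
          rw [← mul_assoc]
          gcongr
          exact le_self_add
  -- the pushforward measure
  set μ : Measure (EuclideanSpace ℝ (Fin d)) := Measure.map f (ϖ.restrict (A n)) with hμ_def
  have hν_le : C⁻¹ • μ ≤ μH[l] := by
    refine Measure.le_hausdorffMeasure l _ 1 one_pos ?_
    intro s hs
    rcases Set.eq_empty_or_nonempty s with hse | ⟨z, hz⟩
    · simp [hse]
    have hsub : s ⊆ EMetric.closedBall z (EMetric.diam s) := fun y hy =>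
      EMetric.edist_le_diam_of_mem hy hz
    have hμs : μ s ≤ C * (EMetric.diam s) ^ l := by
      calc μ s ≤ μ (EMetric.closedBall z (EMetric.diam s)) := measure_mono hsub
        _ = (ϖ.restrict (A n)) (f ⁻¹' EMetric.closedBall z (EMetric.diam s)) := by
            have hballm : MeasurableSet (EMetric.closedBall z (EMetric.diam s)) := by
              have he : EMetric.closedBall z (EMetric.diam s)
                  = (fun y => edist y z) ⁻¹' Set.Iic (EMetric.diam s) := rfl
              rw [he]
              exact (measurable_id.edist measurable_const) measurableSet_Iic
            rw [hμ_def, Measure.map_apply hf hballm]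
        _ = ϖ (A n ∩ f ⁻¹' EMetric.closedBall z (EMetric.diam s)) := by
            rw [Measure.restrict_apply' (hAmeas n), Set.inter_comm]
        _ ≤ C * (EMetric.diam s) ^ l := frostman z _ hs
    calc (C⁻¹ • μ) s = C⁻¹ * μ s := rfl
      _ ≤ C⁻¹ * (C * (EMetric.diam s) ^ l) := mul_le_mul_right hμs _
      _ = (C⁻¹ * C) * (EMetric.diam s) ^ l := by ring
      _ = (EMetric.diam s) ^ l := by rw [ENNReal.inv_mul_cancel hC0 hCtop, one_mul]
  -- conclude positivity
  have hμimg : ϖ (A n) ≤ μ (f '' E) := by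
    have h1 : ϖ (A n) = (ϖ.restrict (A n)) (A n) := by
      rw [Measure.restrict_apply' (hAmeas n), Set.inter_self]
    have h2 : A n ⊆ f ⁻¹' (f '' E) := fun x hx => Set.mem_image_of_mem f hx.1
    calc ϖ (A n) = (ϖ.restrict (A n)) (A n) := h1
      _ ≤ (ϖ.restrict (A n)) (f ⁻¹' (f '' E)) := measure_mono h2
      _ ≤ μ (f '' E) := Measure.le_map_apply hf.aemeasurable _
  have : C⁻¹ * ϖ (A n) ≤ μH[l] (f '' E) := by
    calc C⁻¹ * ϖ (A n) ≤ C⁻¹ * μ (f '' E) := mul_le_mul_right hμimg _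
      _ = (C⁻¹ • μ) (f '' E) := rfl
      _ ≤ μH[l] (f '' E) := hν_le _
  refine lt_of_lt_of_le ?_ this
  exact ENNReal.mul_pos (ENNReal.inv_ne_zero.2 hCtop) hn
end

section
/- Let f : [0,T] → ℝ^d be a function and p ∈ (0,∞). Then the p-dimensional Hausdorff measure of the image satisfies ℋ^p(f([0,T])) ≤ 2^p V_p(f,[0,T]), where V_p(f,[0,T]) = sup over finite partitions 0 = t_0 < t_1 < ⋯ < t_m = T of Σ_{j=0}^{m-1} |f(t_{j+1}) - f(t_j)|^p is the p-variation of f. -/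
open MeasureTheory
open scoped ENNReal

/-- The `p`-variation of `f` on `[0,T]`: the supremum over finite partitions
`0 = t₀ < t₁ < ⋯ < t_m = T` of `Σ_j |f(t_{j+1}) - f(t_j)|^p`. -/
noncomputable def pVariation (d : ℕ) (p T : ℝ) (f : ℝ → EuclideanSpace ℝ (Fin d)) : ℝ≥0∞ :=
  ⨆ (m : ℕ) (t : Fin (m + 1) → ℝ) (_ : StrictMono t) (_ : t 0 = 0)
    (_ : t (Fin.last m) = T),
    ∑ j : Fin m, ENNReal.ofReal (dist (f (t j.succ)) (f (t j.castSucc)) ^ p)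

lemma pVar_key (d : ℕ) (p : ℝ) (f : ℝ → EuclideanSpace ℝ (Fin d)) {s t : ℝ}
    (hst : s < t) (m : ℕ) (u : Fin (m + 1) → ℝ) (hmono : StrictMono u)
    (h0 : u 0 = 0) (hlast : u (Fin.last m) = s) :
    (∑ j : Fin m, ENNReal.ofReal (dist (f (u j.succ)) (f (u j.castSucc)) ^ p))
      + ENNReal.ofReal (dist (f t) (f s) ^ p) ≤ pVariation d p t f := by
  set u' : Fin (m + 2) → ℝ := Fin.snoc u t with hu'
  have hmono' : StrictMono u' := by
    rw [Fin.strictMono_iff_lt_succ]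
    intro i
    rcases eq_or_ne i (Fin.last m) with rfl | hi
    · rw [Fin.succ_last]
      simp only [u', Fin.snoc_castSucc, Fin.snoc_last, hlast]
      exact hst
    · obtain ⟨j, rfl⟩ := Fin.exists_castSucc_eq.2 hi
      rw [Fin.succ_castSucc]
      simp only [u', Fin.snoc_castSucc]
      exact hmono Fin.castSucc_lt_succ
  have h0' : u' 0 = 0 := by
    show u' (Fin.castSucc 0) = 0
    rw [hu', Fin.snoc_castSucc, h0]
  have hlast' : u' (Fin.last (m + 1)) = t := by simp [u', Fin.snoc_last]
  have hsum : (∑ j : Fin (m + 1), ENNReal.ofReal (dist (f (u' j.succ)) (f (u' j.castSucc)) ^ p))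
      = (∑ j : Fin m, ENNReal.ofReal (dist (f (u j.succ)) (f (u j.castSucc)) ^ p))
        + ENNReal.ofReal (dist (f t) (f s) ^ p) := by
    rw [Fin.sum_univ_castSucc]
    congr 1
    · refine Finset.sum_congr rfl fun j _ => ?_
      rw [Fin.succ_castSucc]
      simp only [u', Fin.snoc_castSucc]
    · rw [Fin.succ_last]
      simp [u', Fin.snoc_last, Fin.snoc_castSucc, hlast]
  rw [← hsum, pVariation]
  refine le_trans ?_ (le_iSup _ (m + 1))
  refine le_trans ?_ (le_iSup _ u')
  refine le_trans ?_ (le_iSup _ hmono')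
  refine le_trans ?_ (le_iSup _ h0')
  exact le_of_eq (by rw [iSup_pos hlast'])

lemma pVar_superadd (d : ℕ) (p : ℝ) (f : ℝ → EuclideanSpace ℝ (Fin d)) {s t : ℝ}
    (hs : 0 ≤ s) (hst : s < t) :
    pVariation d p s f + ENNReal.ofReal (dist (f t) (f s) ^ p) ≤ pVariation d p t f := by
  set c := ENNReal.ofReal (dist (f t) (f s) ^ p) with hc
  have hcne : c ≠ ⊤ := ENNReal.ofReal_ne_top
  have hcle : c ≤ pVariation d p t f := by
    rcases eq_or_lt_of_le hs with rfl | hs'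
    · have := pVar_key d p f hst 0 (fun _ => 0) (fun a b hab => absurd hab (by fin_cases a <;> fin_cases b <;> simp)) rfl rfl
      simpa using this
    · have := pVar_key d p f hst 1 ![0, s] (by
        rw [Fin.strictMono_iff_lt_succ]; intro i; fin_cases i <;> simpa using hs') rfl rfl
      exact le_trans le_add_self this
  have h1 : pVariation d p s f ≤ pVariation d p t f - c := by
    rw [pVariation]
    refine iSup_le fun m => iSup_le fun u => iSup_le fun hmono => iSup_le fun h0 =>
      iSup_le fun hlast => ?_
    exact ENNReal.le_sub_of_add_le_right hcne (pVar_key d p f hst m u hmono h0 hlast)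
  calc pVariation d p s f + c ≤ (pVariation d p t f - c) + c := add_le_add h1 le_rfl
    _ = pVariation d p t f := tsub_add_cancel_of_le hcle

lemma pVar_mono (d : ℕ) (p : ℝ) (f : ℝ → EuclideanSpace ℝ (Fin d)) {s t : ℝ}
    (hs : 0 ≤ s) (hst : s ≤ t) : pVariation d p s f ≤ pVariation d p t f := by
  rcases eq_or_lt_of_le hst with rfl | h
  · exact le_rfl
  · exact le_trans le_self_add (pVar_superadd d p f hs h)

/-- `ℋ^p(f([0,T])) ≤ 2^p V_p(f, [0,T])`. -/
theorem hausdorff_image_le_pVariation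
    (d : ℕ) (T p : ℝ) (hT : 0 < T) (hp : 0 < p)
    (f : ℝ → EuclideanSpace ℝ (Fin d)) :
    μH[p] (f '' Set.Icc 0 T) ≤ ENNReal.ofReal (2 ^ p) * pVariation d p T f := by
  classical
  by_cases hV : pVariation d p T f = ⊤
  · rw [hV, ENNReal.mul_top (by positivity)]
    exact le_top
  -- the real-valued variation function
  set w : ℝ → ℝ := fun u => (pVariation d p u f).toReal with hw
  have hfin : ∀ u ∈ Set.Icc (0:ℝ) T, pVariation d p u f ≠ ⊤ := fun u hu =>
    ne_top_of_le_ne_top hV (pVar_mono d p f hu.1 hu.2)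
  have hwmono : ∀ u ∈ Set.Icc (0:ℝ) T, ∀ v ∈ Set.Icc (0:ℝ) T, u ≤ v →
      dist (f v) (f u) ^ p ≤ w v - w u := by
    intro u hu v hv huv
    rcases eq_or_lt_of_le huv with rfl | h
    · simp [dist_self, Real.zero_rpow hp.ne']
    · have h1 := pVar_superadd d p f hu.1 h
      have h2 : (pVariation d p u f).toReal + dist (f v) (f u) ^ p
          ≤ (pVariation d p v f).toReal := by
        have := ENNReal.toReal_mono (hfin v hv) h1
        rwa [ENNReal.toReal_add (hfin u hu) ENNReal.ofReal_ne_top,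
          ENNReal.toReal_ofReal (by positivity)] at this
      simpa [hw] using by linarith
  have hwconst : ∀ u ∈ Set.Icc (0:ℝ) T, ∀ v ∈ Set.Icc (0:ℝ) T, w u = w v → f u = f v := by
    intro u hu v hv huv
    rcases le_total u v with h | h
    · have := hwmono u hu v hv h
      rw [huv, sub_self] at this
      have hd : dist (f v) (f u) = 0 := by
        by_contra hne
        have : 0 < dist (f v) (f u) := lt_of_le_of_ne dist_nonneg (Ne.symm hne)
        exact absurd (Real.rpow_pos_of_pos this p) (not_lt.2 (by linarith))
      exact (eq_of_dist_eq_zero hd).symm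
    · have := hwmono v hv u hu h
      rw [huv, sub_self] at this
      have hd : dist (f u) (f v) = 0 := by
        by_contra hne
        have : 0 < dist (f u) (f v) := lt_of_le_of_ne dist_nonneg (Ne.symm hne)
        exact absurd (Real.rpow_pos_of_pos this p) (not_lt.2 (by linarith))
      exact eq_of_dist_eq_zero hd
  -- the Hölder reparametrization
  set g : ℝ → EuclideanSpace ℝ (Fin d) := fun x =>
    if h : ∃ u, u ∈ Set.Icc (0:ℝ) T ∧ w u = x then f h.choose else 0 with hg
  have hgw : ∀ u ∈ Set.Icc (0:ℝ) T, g (w u) = f u := by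
    intro u hu
    have hex : ∃ v, v ∈ Set.Icc (0:ℝ) T ∧ w v = w u := ⟨u, hu, rfl⟩
    rw [hg]; simp only [dif_pos hex]
    exact hwconst _ hex.choose_spec.1 u hu hex.choose_spec.2
  set A : Set ℝ := w '' Set.Icc 0 T with hA
  -- the key distance estimate for g
  have hdist : ∀ u ∈ Set.Icc (0:ℝ) T, ∀ v ∈ Set.Icc (0:ℝ) T, u ≤ v →
      dist (f v) (f u) ≤ (w v - w u) ^ (1/p) := by
    intro u hu v hv huv
    have h1 := hwmono u hu v hv huv
    have h2 : (dist (f v) (f u) ^ p) ^ (1/p) ≤ (w v - w u) ^ (1/p) :=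
      Real.rpow_le_rpow (by positivity) h1 (by positivity)
    rwa [← Real.rpow_mul dist_nonneg, mul_one_div, div_self hp.ne',
      Real.rpow_one] at h2
  -- `g` is Hölder on `A` with constant 1 and exponent `1/p`
  set r : NNReal := Real.toNNReal (1/p) with hr
  have hrc : (r:ℝ) = 1/p := Real.coe_toNNReal _ (by positivity)
  have hrpos : 0 < r := Real.toNNReal_pos.2 (by positivity)
  have hkey : ∀ u ∈ Set.Icc (0:ℝ) T, ∀ v ∈ Set.Icc (0:ℝ) T, u ≤ v →
      edist (f u) (f v) ≤ edist (w u) (w v) ^ (r:ℝ) := by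
    intro u hu v hv huv
    have hnn : 0 ≤ w v - w u := le_trans (by positivity) (hwmono u hu v hv huv)
    calc edist (f u) (f v) = ENNReal.ofReal (dist (f v) (f u)) := by
          rw [edist_dist, dist_comm]
      _ ≤ ENNReal.ofReal ((w v - w u) ^ (1/p)) :=
          ENNReal.ofReal_le_ofReal (hdist u hu v hv huv)
      _ = ENNReal.ofReal (w v - w u) ^ (1/p) :=
          (ENNReal.ofReal_rpow_of_nonneg hnn (by positivity : (0:ℝ) ≤ 1/p)).symm
      _ ≤ edist (w u) (w v) ^ (r:ℝ) := by
          rw [hrc]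
          refine ENNReal.rpow_le_rpow ?_ (by positivity)
          rw [edist_dist, Real.dist_eq]
          exact ENNReal.ofReal_le_ofReal (by rw [abs_sub_comm]; exact le_abs_self _)
  have hholder : HolderOnWith 1 r g A := by
    intro x hx y hy
    obtain ⟨u, hu, rfl⟩ := hx
    obtain ⟨v, hv, rfl⟩ := hy
    rw [hgw u hu, hgw v hv, ENNReal.coe_one, one_mul]
    rcases le_total u v with h | h
    · exact hkey u hu v hv h
    · rw [edist_comm (f u), edist_comm (w u)]
      exact hkey v hv u hu h
  have himg : f '' Set.Icc 0 T = g '' A := by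
    rw [hA, Set.image_image]
    exact Set.image_congr fun u hu => (hgw u hu).symm
  have hmeas := hholder.hausdorffMeasure_image_le hrpos hp.le
  have hrp : (r:ℝ) * p = 1 := by
    rw [hrc]
    field_simp
  rw [hrp] at hmeas
  have hAsub : A ⊆ Set.Icc 0 ((pVariation d p T f).toReal) := by
    rintro x ⟨u, hu, rfl⟩
    exact ⟨ENNReal.toReal_nonneg, ENNReal.toReal_mono hV (pVar_mono d p f hu.1 hu.2)⟩
  have hA1 : μH[(1:ℝ)] A ≤ pVariation d p T f := by
    calc μH[(1:ℝ)] A ≤ μH[(1:ℝ)] (Set.Icc 0 ((pVariation d p T f).toReal)) :=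
          measure_mono hAsub
      _ = volume (Set.Icc 0 ((pVariation d p T f).toReal)) := by
          rw [MeasureTheory.hausdorffMeasure_real]
      _ = ENNReal.ofReal ((pVariation d p T f).toReal - 0) := Real.volume_Icc
      _ = pVariation d p T f := by rw [sub_zero, ENNReal.ofReal_toReal hV]
  calc μH[p] (f '' Set.Icc 0 T) = μH[p] (g '' A) := by rw [himg]
    _ ≤ (1:ℝ≥0∞) ^ p * μH[(1:ℝ)] A := hmeas
    _ = μH[(1:ℝ)] A := by rw [ENNReal.one_rpow, one_mul]
    _ ≤ pVariation d p T f := hA1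
    _ ≤ ENNReal.ofReal (2 ^ p) * pVariation d p T f := by
        refine le_mul_of_one_le_left zero_le ?_
        rw [← ENNReal.ofReal_one]
        exact ENNReal.ofReal_le_ofReal (Real.one_le_rpow one_le_two hp.le)
end

section
/- Let (X_t) be a family of ℝ^d-valued random variables indexed by t ∈ [0,1] on a probability space, and suppose there are constants C > 0 and λ > 0 such that E|X_t - X_s|^{-λ} ≤ C |t-s|^{-1} for all 0 ≤ s < t ≤ 1. Let F ⊆ [0,1] be a Borel set carrying a probability measure μ with ∬ |t-s|^{-α} μ(dt)μ(ds) < ∞ for some α ∈ (0,1]. Then almost surely ∬ |X_t - X_s|^{-αλ} μ(dt)μ(ds) < ∞, and consequently ℋ^{αλ}(X(F)) > 0 almost surely. -/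
open MeasureTheory
open scoped ENNReal

private lemma jensen_rpow {Ω : Type*} [MeasurableSpace Ω] (ℙ : Measure Ω)
    [IsProbabilityMeasure ℙ] {f : Ω → ℝ≥0∞} (hf : AEMeasurable f ℙ) {α : ℝ}
    (hα : 0 < α) (hα1 : α ≤ 1) : ∫⁻ ω, f ω ^ α ∂ℙ ≤ (∫⁻ ω, f ω ∂ℙ) ^ α := by
  rcases eq_or_lt_of_le hα1 with h1 | h1
  · subst h1; simp
  have hpq : (α⁻¹).HolderConjugate (1 - α)⁻¹ := by
    rw [Real.holderConjugate_iff]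
    constructor
    · exact (one_lt_inv_iff₀).mpr ⟨hα, h1⟩
    · rw [inv_inv, inv_inv]; ring
  have h := ENNReal.lintegral_mul_le_Lp_mul_Lq ℙ hpq
    (f := fun ω => f ω ^ α) (g := fun _ => (1 : ℝ≥0∞))
    (hf.pow_const α) aemeasurable_const
  simp only [Pi.mul_apply, mul_one, ENNReal.one_rpow, lintegral_one, measure_univ,
    one_div, inv_inv] at h
  calc ∫⁻ ω, f ω ^ α ∂ℙ
      ≤ (∫⁻ ω, (f ω ^ α) ^ α⁻¹ ∂ℙ) ^ α := h
    _ = (∫⁻ ω, f ω ∂ℙ) ^ α := by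
        congr 1
        refine lintegral_congr fun ω => ?_
        rw [← ENNReal.rpow_mul, mul_inv_cancel₀ hα.ne', ENNReal.rpow_one]

set_option maxHeartbeats 2000000 in
/-- if `E|X_t - X_s|^{-λ} ≤ C|t-s|^{-1}` and `F ⊆ [0,1]` carries a
probability measure `μ` of finite `α`-energy (`α ∈ (0,1]`), then almost surely the image
measure under `t ↦ X_t` has finite `αλ`-energy and `ℋ^{αλ}(X(F)) > 0`. -/
theorem image_hausdorff_pos_of_neg_moment
    {Ω : Type*} [MeasurableSpace Ω] (ℙ : Measure Ω) [IsProbabilityMeasure ℙ]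
    (d : ℕ) (X : ℝ → Ω → EuclideanSpace ℝ (Fin d))
    (hX : Measurable (fun p : ℝ × Ω => X p.1 p.2))
    (C l : ℝ) (hC : 0 < C) (hl : 0 < l)
    (hmom : ∀ s t : ℝ, 0 ≤ s → s < t → t ≤ 1 →
      (∫⁻ ω, (edist (X t ω) (X s ω)) ^ (-l) ∂ℙ) ≤ ENNReal.ofReal (C * (t - s)⁻¹))
    (F : Set ℝ) (hF : MeasurableSet F) (hF01 : F ⊆ Set.Icc 0 1)
    (μ : Measure ℝ) [IsProbabilityMeasure μ] (hμ : μ Fᶜ = 0)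
    (α : ℝ) (hα : 0 < α) (hα1 : α ≤ 1)
    (henergy : (∫⁻ t in F, ∫⁻ s in F, (edist t s) ^ (-α) ∂μ ∂μ) < ∞) :
    ∀ᵐ ω ∂ℙ,
      (∫⁻ t in F, ∫⁻ s in F, (edist (X t ω) (X s ω)) ^ (-(α * l)) ∂μ ∂μ) < ∞ ∧
      0 < μH[α * l] ((fun t => X t ω) '' F) := by
  have hd : 0 < α * l := mul_pos hα hl
  set μF : Measure ℝ := μ.restrict F with hμFdef
  have hμF1 : μ F = 1 := by
    have h := measure_add_measure_compl (μ := μ) hF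
    rw [hμ, add_zero, measure_univ] at h
    exact h
  set ρ : Measure (ℝ × ℝ) := μF.prod μF with hρdef
  -- measurability of kernels
  have hK2 : Measurable fun q : (ℝ × ℝ) × Ω =>
      edist (X q.1.1 q.2) (X q.1.2 q.2) ^ (-(α * l)) := by
    apply Measurable.pow_const
    exact measurable_edist.comp ((hX.comp (measurable_fst.fst.prodMk measurable_snd)).prodMk
      (hX.comp (measurable_fst.snd.prodMk measurable_snd)))
  have hKts : Measurable fun p : ℝ × ℝ => edist p.1 p.2 ^ (-α) :=
    measurable_edist.pow_const _
  have hEρ : ∫⁻ p, edist p.1 p.2 ^ (-α) ∂ρ = ∫⁻ t in F, ∫⁻ s in F, edist t s ^ (-α) ∂μ ∂μ :=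
    lintegral_prod _ hKts.aemeasurable
  have hEρ_lt : ∫⁻ p, edist p.1 p.2 ^ (-α) ∂ρ < ∞ := by rw [hEρ]; exact henergy
  have hFc : μF Fᶜ = 0 := by
    rw [hμFdef, Measure.restrict_apply hF.compl]
    simp
  have hae1 : ∀ᵐ p ∂ρ, p.1 ∈ F := by
    rw [ae_iff]
    have h : {p : ℝ × ℝ | ¬ p.1 ∈ F} = Fᶜ ×ˢ Set.univ := by
      ext p; simp [Set.mem_prod]
    rw [h, hρdef, Measure.prod_prod, hFc, zero_mul]
  have hae2 : ∀ᵐ p ∂ρ, p.2 ∈ F := by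
    rw [ae_iff]
    have h : {p : ℝ × ℝ | ¬ p.2 ∈ F} = Set.univ ×ˢ Fᶜ := by
      ext p; simp [Set.mem_prod]
    rw [h, hρdef, Measure.prod_prod, hFc, mul_zero]
  have haene : ∀ᵐ p ∂ρ, p.1 ≠ p.2 := by
    filter_upwards [ae_lt_top hKts hEρ_lt.ne] with p hp
    intro hcontra
    rw [hcontra, edist_self, ENNReal.zero_rpow_of_neg (by linarith)] at hp
    exact lt_irrefl _ hp
  -- pointwise moment bound
  have key : ∀ t u : ℝ, 0 ≤ u → u < t → t ≤ 1 →
      ∫⁻ ω, edist (X t ω) (X u ω) ^ (-(α * l)) ∂ℙ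
        ≤ ENNReal.ofReal (C ^ α) * edist t u ^ (-α) := by
    intro t u hu hut ht1
    have htu : (0:ℝ) < t - u := sub_pos.mpr hut
    have hm : Measurable fun ω => edist (X t ω) (X u ω) ^ (-l) := by
      apply Measurable.pow_const
      exact measurable_edist.comp ((hX.comp (measurable_const.prodMk measurable_id)).prodMk
        (hX.comp (measurable_const.prodMk measurable_id)))
    have heq : ∀ ω, edist (X t ω) (X u ω) ^ (-(α * l))
        = (edist (X t ω) (X u ω) ^ (-l)) ^ α := by
      intro ω; rw [← ENNReal.rpow_mul]; ring_nf
    calc ∫⁻ ω, edist (X t ω) (X u ω) ^ (-(α * l)) ∂ℙ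
        = ∫⁻ ω, (edist (X t ω) (X u ω) ^ (-l)) ^ α ∂ℙ := by simp_rw [heq]
      _ ≤ (∫⁻ ω, edist (X t ω) (X u ω) ^ (-l) ∂ℙ) ^ α :=
          jensen_rpow ℙ hm.aemeasurable hα hα1
      _ ≤ (ENNReal.ofReal (C * (t - u)⁻¹)) ^ α :=
          ENNReal.rpow_le_rpow (hmom u t hu hut ht1) hα.le
      _ = ENNReal.ofReal (C ^ α) * edist t u ^ (-α) := by
          rw [ENNReal.ofReal_rpow_of_pos (mul_pos hC (inv_pos.mpr htu)),
            Real.mul_rpow hC.le (inv_pos.mpr htu).le,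
            ENNReal.ofReal_mul (Real.rpow_nonneg hC.le α)]
          congr 1
          rw [edist_dist, Real.dist_eq, abs_of_pos htu, ENNReal.ofReal_rpow_of_pos htu,
            Real.rpow_neg htu.le, ← Real.inv_rpow htu.le]
  -- symmetric a.e. version
  have key2 : ∀ᵐ p ∂ρ, ∫⁻ ω, edist (X p.1 ω) (X p.2 ω) ^ (-(α * l)) ∂ℙ
      ≤ ENNReal.ofReal (C ^ α) * edist p.1 p.2 ^ (-α) := by
    filter_upwards [hae1, hae2, haene] with p h1 h2 hne
    obtain ⟨h10, h11⟩ := hF01 h1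
    obtain ⟨h20, h21⟩ := hF01 h2
    rcases lt_or_gt_of_ne hne with h | h
    · calc ∫⁻ ω, edist (X p.1 ω) (X p.2 ω) ^ (-(α * l)) ∂ℙ
          = ∫⁻ ω, edist (X p.2 ω) (X p.1 ω) ^ (-(α * l)) ∂ℙ := by simp_rw [edist_comm]
        _ ≤ ENNReal.ofReal (C ^ α) * edist p.2 p.1 ^ (-α) := key p.2 p.1 h10 h h21
        _ = ENNReal.ofReal (C ^ α) * edist p.1 p.2 ^ (-α) := by rw [edist_comm]
    · exact key p.1 p.2 h20 h h11
  -- Tonelli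
  have hK2' : Measurable (Function.uncurry fun (ω : Ω) (p : ℝ × ℝ) =>
      edist (X p.1 ω) (X p.2 ω) ^ (-(α * l))) := by
    apply Measurable.pow_const
    exact measurable_edist.comp ((hX.comp (measurable_snd.fst.prodMk measurable_fst)).prodMk
      (hX.comp (measurable_snd.snd.prodMk measurable_fst)))
  have hswap : ∫⁻ ω, ∫⁻ p, edist (X p.1 ω) (X p.2 ω) ^ (-(α * l)) ∂ρ ∂ℙ
      = ∫⁻ p, ∫⁻ ω, edist (X p.1 ω) (X p.2 ω) ^ (-(α * l)) ∂ℙ ∂ρ :=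
    lintegral_lintegral_swap hK2'.aemeasurable
  have hbound : ∫⁻ ω, ∫⁻ p, edist (X p.1 ω) (X p.2 ω) ^ (-(α * l)) ∂ρ ∂ℙ < ∞ := by
    rw [hswap]
    calc ∫⁻ p, ∫⁻ ω, edist (X p.1 ω) (X p.2 ω) ^ (-(α * l)) ∂ℙ ∂ρ
        ≤ ∫⁻ p, ENNReal.ofReal (C ^ α) * edist p.1 p.2 ^ (-α) ∂ρ := lintegral_mono_ae key2
      _ = ENNReal.ofReal (C ^ α) * ∫⁻ p, edist p.1 p.2 ^ (-α) ∂ρ :=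
          lintegral_const_mul _ hKts
      _ < ∞ := ENNReal.mul_lt_top ENNReal.ofReal_lt_top hEρ_lt
  have hGmeas : Measurable fun ω => ∫⁻ p, edist (X p.1 ω) (X p.2 ω) ^ (-(α * l)) ∂ρ :=
    Measurable.lintegral_prod_left (f := fun (p : ℝ × ℝ) (ω : Ω) =>
      edist (X p.1 ω) (X p.2 ω) ^ (-(α * l))) hK2
  have hfin : ∀ᵐ ω ∂ℙ, ∫⁻ p, edist (X p.1 ω) (X p.2 ω) ^ (-(α * l)) ∂ρ < ∞ :=
    ae_lt_top hGmeas hbound.ne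
  filter_upwards [hfin] with ω hω
  have hY : Measurable fun t => X t ω := hX.comp (measurable_id.prodMk measurable_const)
  have hmeasω : Measurable fun p : ℝ × ℝ => edist (X p.1 ω) (X p.2 ω) ^ (-(α * l)) :=
    (measurable_edist.comp ((hY.comp measurable_fst).prodMk
      (hY.comp measurable_snd))).pow_const _
  have hiter : ∫⁻ t in F, ∫⁻ s in F, edist (X t ω) (X s ω) ^ (-(α * l)) ∂μ ∂μ
      = ∫⁻ p, edist (X p.1 ω) (X p.2 ω) ^ (-(α * l)) ∂ρ :=
    (lintegral_prod _ hmeasω.aemeasurable).symm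
  constructor
  · rw [hiter]; exact hω
  -- Hausdorff part
  set ν : Measure (EuclideanSpace ℝ (Fin d)) := μF.map (fun t => X t ω) with hνdef
  have hν_apply : ∀ {T : Set (EuclideanSpace ℝ (Fin d))}, MeasurableSet T →
      ν T = μF ((fun t => X t ω) ⁻¹' T) :=
    fun hT => Measure.map_apply hY hT
  have hμFF : μF F = 1 := by rw [hμFdef, Measure.restrict_apply_self]; exact hμF1
  have hνuniv : ν Set.univ = 1 := by
    rw [hν_apply MeasurableSet.univ, Set.preimage_univ, hμFdef,
      Measure.restrict_apply_univ, hμF1]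
  haveI : IsProbabilityMeasure ν := ⟨hνuniv⟩
  set g : EuclideanSpace ℝ (Fin d) → ℝ≥0∞ := fun x => ∫⁻ y, edist x y ^ (-(α * l)) ∂ν
      with hgdef
  have hker : Measurable fun q : EuclideanSpace ℝ (Fin d) × EuclideanSpace ℝ (Fin d) =>
      edist q.1 q.2 ^ (-(α * l)) :=
    measurable_edist.pow_const _
  have hgmeas : Measurable g := hker.lintegral_prod_right'
  have hgint : ∫⁻ x, g x ∂ν = ∫⁻ p, edist (X p.1 ω) (X p.2 ω) ^ (-(α * l)) ∂ρ := by
    have hinner : ∀ t : ℝ, g (X t ω) = ∫⁻ u, edist (X t ω) (X u ω) ^ (-(α * l)) ∂μF :=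
      fun t => lintegral_map ((measurable_edist.comp
        (measurable_const.prodMk measurable_id)).pow_const _) hY
    calc ∫⁻ x, g x ∂ν = ∫⁻ t, g (X t ω) ∂μF := lintegral_map hgmeas hY
      _ = ∫⁻ t, ∫⁻ u, edist (X t ω) (X u ω) ^ (-(α * l)) ∂μF ∂μF :=
          lintegral_congr hinner
      _ = ∫⁻ p, edist (X p.1 ω) (X p.2 ω) ^ (-(α * l)) ∂ρ :=
          (lintegral_prod _ hmeasω.aemeasurable).symm
  have hgfin : ∫⁻ x, g x ∂ν < ∞ := by rw [hgint]; exact hω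
  obtain ⟨M, hM⟩ : ∃ M : ℕ, 0 < ν {x | g x ≤ M} := by
    by_contra hcon
    push_neg at hcon
    have hcon' : ∀ M : ℕ, ν {x | g x ≤ M} = 0 := fun M => le_antisymm (hcon M) (zero_le)
    have h1 : ν {x | g x < ∞} = 0 := by
      have hsub : {x | g x < ∞} ⊆ ⋃ n : ℕ, {x | g x ≤ n} := by
        intro x hx
        obtain ⟨n, hn⟩ := ENNReal.exists_nat_gt hx.ne
        exact Set.mem_iUnion.mpr ⟨n, hn.le⟩
      refine le_antisymm ((measure_mono hsub).trans ((measure_iUnion_le _).trans ?_))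
        (zero_le)
      simp [hcon']
    have h2 : ν {x | g x = ∞} = 0 := by
      have h := ae_lt_top hgmeas hgfin.ne
      rw [ae_iff] at h
      simpa only [not_lt, top_le_iff] using h
    have h3 : (1 : ℝ≥0∞) ≤ 0 := by
      calc (1 : ℝ≥0∞) = ν Set.univ := hνuniv.symm
        _ ≤ ν ({x | g x < ∞} ∪ {x | g x = ∞}) :=
            measure_mono fun x _ => (lt_or_eq_of_le (le_top : g x ≤ ∞)).imp id id
        _ ≤ ν {x | g x < ∞} + ν {x | g x = ∞} := measure_union_le _ _
        _ = 0 := by rw [h1, h2, add_zero]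
    simp at h3
  set c : ℝ≥0∞ := (M : ℝ≥0∞) + 1 with hcdef
  have hc0 : c ≠ 0 := by simp [hcdef]
  have hctop : c ≠ ∞ := by simp [hcdef]
  set A : Set (EuclideanSpace ℝ (Fin d)) := {x | g x ≤ M} with hAdef
  have hA : MeasurableSet A := hgmeas measurableSet_Iic
  have hball : ∀ x ∈ A, ∀ r : ℝ≥0∞, ν (EMetric.closedBall x r) ≤ c * r ^ (α * l) := by
    intro x hx r
    have hgxc : g x ≤ c := le_trans hx (by simp [hcdef, le_self_add])
    have hpot : ν (EMetric.closedBall x r) * r ^ (-(α * l)) ≤ g x := by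
      have hmono : ∫⁻ _ in EMetric.closedBall x r, r ^ (-(α * l)) ∂ν
          ≤ ∫⁻ y in EMetric.closedBall x r, edist x y ^ (-(α * l)) ∂ν := by
        refine setLIntegral_mono' (measurableSet_le
          (measurable_edist.comp (measurable_id.prodMk measurable_const))
          measurable_const) fun y hy => ?_
        rw [ENNReal.rpow_neg, ENNReal.rpow_neg]
        exact ENNReal.inv_le_inv.mpr (ENNReal.rpow_le_rpow
          (by rw [edist_comm]; exact hy) hd.le)
      calc ν (EMetric.closedBall x r) * r ^ (-(α * l))
          = ∫⁻ _ in EMetric.closedBall x r, r ^ (-(α * l)) ∂ν := by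
            rw [setLIntegral_const, mul_comm]
        _ ≤ ∫⁻ y in EMetric.closedBall x r, edist x y ^ (-(α * l)) ∂ν := hmono
        _ ≤ g x := setLIntegral_le_lintegral _ _
    rcases eq_or_ne r 0 with rfl | hr0
    · have hνB : ν (EMetric.closedBall x 0) = 0 := by
        by_contra hne
        rw [ENNReal.zero_rpow_of_neg (by linarith), ENNReal.mul_top hne] at hpot
        exact absurd (top_le_iff.mp (hpot.trans hgxc)) hctop
      simp [hνB]
    rcases eq_or_ne r ∞ with rfl | hrtop
    · rw [ENNReal.top_rpow_of_pos hd, ENNReal.mul_top hc0]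
      exact le_top
    · have hrw : ν (EMetric.closedBall x r)
          = ν (EMetric.closedBall x r) * r ^ (-(α * l)) * r ^ (α * l) := by
        rw [mul_assoc, ← ENNReal.rpow_add _ _ hr0 hrtop, neg_add_cancel,
          ENNReal.rpow_zero, mul_one]
      rw [hrw]
      exact mul_le_mul_left (hpot.trans hgxc) _
  have hmd : c⁻¹ • ν.restrict A ≤ μH[α * l] := by
    refine Measure.le_hausdorffMeasure _ _ 1 one_pos fun U _ => ?_
    rw [Measure.smul_apply, Measure.restrict_apply' hA, smul_eq_mul]
    rcases Set.eq_empty_or_nonempty (U ∩ A) with hUA | ⟨x, hxU, hxA⟩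
    · rw [hUA]; simp
    · have hsub : U ⊆ EMetric.closedBall x (EMetric.diam U) := fun y hy =>
        EMetric.edist_le_diam_of_mem hy hxU
      calc c⁻¹ * ν (U ∩ A)
          ≤ c⁻¹ * (c * EMetric.diam U ^ (α * l)) :=
            mul_le_mul_right ((measure_mono (Set.inter_subset_left.trans hsub)).trans
              (hball x hxA _)) _
        _ = EMetric.diam U ^ (α * l) := by
            rw [← mul_assoc, ENNReal.inv_mul_cancel hc0 hctop, one_mul]
  have hfinal := Measure.le_iff'.mp hmd ((fun t => X t ω) '' F)
  obtain ⟨T, hsubT, hTmeas, hTeq⟩ :=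
    exists_measurable_superset ν ((fun t => X t ω) '' F ∩ A)
  have hT1 : ν (T ∪ Aᶜ) = 1 := by
    have hsup : F ⊆ (fun t => X t ω) ⁻¹' (T ∪ Aᶜ) := by
      intro t ht
      by_cases hmem : X t ω ∈ A
      · exact Or.inl (hsubT ⟨Set.mem_image_of_mem _ ht, hmem⟩)
      · exact Or.inr hmem
    rw [hν_apply (hTmeas.union hA.compl)]
    refine le_antisymm (le_of_le_of_eq (measure_mono (Set.subset_univ _))
      (by rw [hμFdef, Measure.restrict_apply_univ, hμF1])) ?_
    calc (1 : ℝ≥0∞) = μF F := hμFF.symm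
      _ ≤ μF ((fun t => X t ω) ⁻¹' (T ∪ Aᶜ)) := measure_mono hsup
  have hAT : ν A ≤ ν T := by
    have h5 : ν A + ν Aᶜ ≤ ν T + ν Aᶜ := by
      rw [measure_add_measure_compl hA, hνuniv, ← hT1]
      exact measure_union_le T Aᶜ
    exact (ENNReal.add_le_add_iff_right (measure_ne_top ν Aᶜ)).mp h5
  have hpos : 0 < ν ((fun t => X t ω) '' F ∩ A) := by
    rw [← hTeq]
    exact lt_of_lt_of_le hM hAT
  refine lt_of_lt_of_le ?_ hfinal
  rw [Measure.smul_apply, Measure.restrict_apply' hA, smul_eq_mul]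
  exact ENNReal.mul_pos (ENNReal.inv_ne_zero.mpr hctop) hpos.ne'
end

section
/- Let μ be a Lévy measure on ℝ^d satisfying: there is β > 1 with sup_{ℓ ∈ S^{d-1}} q^U(rℓ) ≤ β inf_{ℓ ∈ S^{d-1}} q^L(rℓ) for all r ≥ 1, where q^U(ξ) = ∫ (1 ∧ ⟨ξ,z⟩²) μ(dz) and q^L(ξ) = ∫_{|⟨ξ,z⟩|≤1} ⟨ξ,z⟩² μ(dz). Then the Lévy–Khintchine exponent q(ξ) = ∫ (1 - cos⟨ξ,z⟩) μ(dz) satisfies c₁ q^L(ξ) ≤ q(ξ) ≤ c₂ q^L(ξ) for all |ξ| ≥ 1, with c₁ = 1 - cos 1 and c₂ = 2β; i.e. q ≍ q^L ≍ q^U for |ξ| ≥ 1. -/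
open MeasureTheory Real
open scoped ENNReal RealInnerProductSpace

lemma key_low : ∀ s : ℝ, 0 ≤ s → s ≤ 1 → (1 - Real.cos 1) * s ^ 2 ≤ 1 - Real.cos s := by
  intro s hs0 hs1
  have hmem0 : (0:ℝ) ∈ Set.Icc (0:ℝ) π := ⟨le_refl _, Real.pi_pos.le⟩
  have hmemh : (1/2:ℝ) ∈ Set.Icc (0:ℝ) π := ⟨by norm_num, by linarith [Real.pi_gt_three]⟩
  have hc := strictConcaveOn_sin_Icc.concaveOn.2 hmem0 hmemh
    (show (0:ℝ) ≤ 1 - s by linarith) hs0 (by ring)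
  simp only [smul_eq_mul, mul_zero, Real.sin_zero, zero_add] at hc
  have hsin : s * Real.sin (1/2) ≤ Real.sin (s/2) := by
    convert hc using 2
    · rfl
    · ring
  have h1 : Real.sin (s/2) ^ 2 = (1 - Real.cos s) / 2 := by
    have h := Real.sin_sq_eq_half_sub (s/2)
    have e : 2 * (s/2) = s := by ring
    rw [e] at h; linarith
  have h2 : Real.sin (1/2) ^ 2 = (1 - Real.cos 1) / 2 := by
    have h := Real.sin_sq_eq_half_sub ((1:ℝ)/2)
    have e : 2 * ((1:ℝ)/2) = 1 := by ring
    rw [e] at h; linarith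
  have hsp : 0 ≤ Real.sin (1/2) :=
    Real.sin_nonneg_of_nonneg_of_le_pi (by norm_num) (by linarith [Real.pi_gt_three])
  nlinarith [mul_self_le_mul_self (mul_nonneg hs0 hsp) hsin]

lemma pw_low (t : ℝ) (ht : |t| ≤ 1) : (1 - Real.cos 1) * t ^ 2 ≤ 1 - Real.cos t := by
  have := key_low |t| (abs_nonneg t) ht
  rwa [sq_abs, Real.cos_abs] at this

lemma pw_up (t : ℝ) : 1 - Real.cos t ≤ 2 * min 1 (t ^ 2) := by
  rcases le_total (t^2) 1 with h | h
  · rw [min_eq_right h]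
    nlinarith [Real.one_sub_sq_div_two_le_cos (x := t)]
  · rw [min_eq_left h]
    nlinarith [Real.neg_one_le_cos t]

/-- under the non-oscillation condition
`sup_{ℓ∈S^{d-1}} q^U(rℓ) ≤ β inf_{ℓ∈S^{d-1}} q^L(rℓ)` for `r ≥ 1`, the
Lévy–Khintchine exponent `q` satisfies `(1-cos 1) q^L(ξ) ≤ q(ξ) ≤ 2β q^L(ξ)` for
`|ξ| ≥ 1`; i.e. `q ≍ q^L ≍ q^U` for `|ξ| ≥ 1`. -/
theorem levy_exponent_comparable
    (d : ℕ) (μ : Measure (EuclideanSpace ℝ (Fin d)))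
    (hμ : ∫⁻ z, ENNReal.ofReal (min 1 (‖z‖ ^ 2)) ∂μ < ∞)
    (β : ℝ) (hβ : 1 < β)
    (hosc : ∀ r : ℝ, 1 ≤ r → ∀ ℓ ℓ' : EuclideanSpace ℝ (Fin d), ‖ℓ‖ = 1 → ‖ℓ'‖ = 1 →
      (∫⁻ z, ENNReal.ofReal (min 1 (⟪r • ℓ, z⟫ ^ 2)) ∂μ) ≤
        ENNReal.ofReal β *
          ∫⁻ z in {z | |⟪r • ℓ', z⟫| ≤ 1}, ENNReal.ofReal (⟪r • ℓ', z⟫ ^ 2) ∂μ) :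
    ∀ ξ : EuclideanSpace ℝ (Fin d), 1 ≤ ‖ξ‖ →
      ENNReal.ofReal (1 - Real.cos 1) *
          (∫⁻ z in {z | |⟪ξ, z⟫| ≤ 1}, ENNReal.ofReal (⟪ξ, z⟫ ^ 2) ∂μ) ≤
        (∫⁻ z, ENNReal.ofReal (1 - Real.cos ⟪ξ, z⟫) ∂μ) ∧
      (∫⁻ z, ENNReal.ofReal (1 - Real.cos ⟪ξ, z⟫) ∂μ) ≤
        ENNReal.ofReal (2 * β) *
          ∫⁻ z in {z | |⟪ξ, z⟫| ≤ 1}, ENNReal.ofReal (⟪ξ, z⟫ ^ 2) ∂μ := by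
  intro ξ hξ
  have hc1 : (0:ℝ) ≤ 1 - Real.cos 1 := by
    nlinarith [Real.cos_le_one 1]
  have hSmeas : MeasurableSet {z : EuclideanSpace ℝ (Fin d) | |⟪ξ, z⟫| ≤ 1} := by
    have hcont : Continuous fun z : EuclideanSpace ℝ (Fin d) => |⟪ξ, z⟫| :=
      (continuous_const.inner continuous_id).abs
    exact (isClosed_le hcont continuous_const).measurableSet
  constructor
  · calc ENNReal.ofReal (1 - Real.cos 1) *
          ∫⁻ z in {z | |⟪ξ, z⟫| ≤ 1}, ENNReal.ofReal (⟪ξ, z⟫ ^ 2) ∂μ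
        = ∫⁻ z in {z | |⟪ξ, z⟫| ≤ 1},
            ENNReal.ofReal ((1 - Real.cos 1) * ⟪ξ, z⟫ ^ 2) ∂μ := by
          rw [← lintegral_const_mul' _ _ ENNReal.ofReal_ne_top]
          exact lintegral_congr fun z => (ENNReal.ofReal_mul hc1).symm
      _ ≤ ∫⁻ z in {z | |⟪ξ, z⟫| ≤ 1}, ENNReal.ofReal (1 - Real.cos ⟪ξ, z⟫) ∂μ := by
          refine setLIntegral_mono' hSmeas fun z hz => ?_
          exact ENNReal.ofReal_le_ofReal (pw_low _ hz)
      _ ≤ ∫⁻ z, ENNReal.ofReal (1 - Real.cos ⟪ξ, z⟫) ∂μ :=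
          setLIntegral_le_lintegral _ _
  · have hne : ξ ≠ 0 := by
      intro h; rw [h, norm_zero] at hξ; linarith
    set ℓ : EuclideanSpace ℝ (Fin d) := ‖ξ‖⁻¹ • ξ with hℓdef
    have hℓ : ‖ℓ‖ = 1 := norm_smul_inv_norm hne
    have hrl : ‖ξ‖ • ℓ = ξ := by
      rw [hℓdef, smul_smul, mul_inv_cancel₀ (norm_ne_zero_iff.mpr hne), one_smul]
    have hq := hosc ‖ξ‖ hξ ℓ ℓ hℓ hℓ
    rw [hrl] at hq
    calc (∫⁻ z, ENNReal.ofReal (1 - Real.cos ⟪ξ, z⟫) ∂μ)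
        ≤ ∫⁻ z, ENNReal.ofReal (2 * min 1 (⟪ξ, z⟫ ^ 2)) ∂μ :=
          lintegral_mono fun z => ENNReal.ofReal_le_ofReal (pw_up _)
      _ = ENNReal.ofReal 2 * ∫⁻ z, ENNReal.ofReal (min 1 (⟪ξ, z⟫ ^ 2)) ∂μ := by
          rw [← lintegral_const_mul' _ _ ENNReal.ofReal_ne_top]
          exact lintegral_congr fun z => ENNReal.ofReal_mul (by norm_num)
      _ ≤ ENNReal.ofReal 2 * (ENNReal.ofReal β *
            ∫⁻ z in {z | |⟪ξ, z⟫| ≤ 1}, ENNReal.ofReal (⟪ξ, z⟫ ^ 2) ∂μ) :=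
          mul_le_mul_right hq _
      _ = ENNReal.ofReal (2 * β) *
            ∫⁻ z in {z | |⟪ξ, z⟫| ≤ 1}, ENNReal.ofReal (⟪ξ, z⟫ ^ 2) ∂μ := by
          rw [ENNReal.ofReal_mul (by norm_num), mul_assoc]
end
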